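/- Let d ≥ 2 be an integer, r > 0, and 0 < θ < (1 - √2/2) r. Then there exists a finite set of points W ⊆ S^d(r) with |W| ≥ ((d² - 1)√π / d) · (Γ(d/2 + 1) / Γ(d/2 + 3/2)) · (r/(2θ))^{(d-1)/2} such that for every w ∈ W, the spherical cap S^d_θ(r, w) intersects W only in {w} (i.e., S^d_θ(r, w) ∩ W = {w}). -/

import Mathlib

set_option maxHeartbeats 1000000

open MeasureTheory Set Metric Real
open scoped ENNReal
open scoped RealInnerProductSpace

noncomputable section

/-- Volume of a region given by a radial profile over the first coordinate. -/
lemma slab_volume (d : ℕ) [NeZero d] (A : Set ℝ) (hA : MeasurableSet A) (f : ℝ → ℝ)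
    (hf : ∀ t ∈ A, 0 ≤ f t) (hfm : Measurable f) :
    volume {X : EuclideanSpace ℝ (Fin (d+1)) |
        X 0 ∈ A ∧ Real.sqrt (∑ i : Fin d, X i.succ ^ 2) ≤ f (X 0)}
      = ∫⁻ t in A, (ENNReal.ofReal (f t)) ^ d *
          ENNReal.ofReal (Real.sqrt Real.pi ^ d / Real.Gamma (d / 2 + 1)) := by
  classical
  haveI : Nonempty (Fin d) := ⟨⟨0, Nat.pos_of_ne_zero (NeZero.ne d)⟩⟩
  set c : ℝ≥0∞ := ENNReal.ofReal (Real.sqrt Real.pi ^ d / Real.Gamma (d / 2 + 1)) with hc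
  -- the target set in ℝ × (Fin d → ℝ)
  set T : Set (ℝ × (Fin d → ℝ)) :=
    {p | p.1 ∈ A ∧ Real.sqrt (∑ i : Fin d, p.2 i ^ 2) ≤ f p.1} with hT
  have hTmeas : MeasurableSet T := by
    have m1 : Measurable fun p : ℝ × (Fin d → ℝ) => Real.sqrt (∑ i, p.2 i ^ 2) := by
      apply Measurable.sqrt
      exact Finset.measurable_sum _ (fun i _ => ((measurable_pi_apply i).comp measurable_snd).pow_const 2)
    have m2 : Measurable fun p : ℝ × (Fin d → ℝ) => f p.1 := hfm.comp measurable_fst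
    rw [hT, Set.setOf_and]
    exact (measurable_fst hA).inter (measurableSet_le m1 m2)
  -- measure-preserving map
  have h1 := EuclideanSpace.volume_preserving_symm_measurableEquiv_toLp (Fin (d+1))
  have h2 := MeasureTheory.volume_preserving_piFinSuccAbove (fun _ : Fin (d+1) => ℝ) 0
  set φ : EuclideanSpace ℝ (Fin (d+1)) ≃ᵐ ℝ × (Fin d → ℝ) :=
    (MeasurableEquiv.toLp 2 (Fin (d+1) → ℝ)).symm.trans
      (MeasurableEquiv.piFinSuccAbove (fun _ : Fin (d+1) => ℝ) 0) with hφ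
  have hφp : MeasurePreserving φ volume volume := h2.comp h1
  have hpre : {X : EuclideanSpace ℝ (Fin (d+1)) |
        X 0 ∈ A ∧ Real.sqrt (∑ i : Fin d, X i.succ ^ 2) ≤ f (X 0)} = φ ⁻¹' T := by
    ext X
    simp only [hT, hφ, Set.mem_setOf_eq, Set.mem_preimage, MeasurableEquiv.trans_apply,
      MeasurableEquiv.piFinSuccAbove_apply, Fin.zero_succAbove]
    rfl
  rw [hpre, hφp.measure_preimage hTmeas.nullMeasurableSet]
  -- Fubini
  rw [MeasureTheory.Measure.volume_eq_prod, Measure.prod_apply hTmeas]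
  have hslice : ∀ t : ℝ, (volume (Prod.mk t ⁻¹' T))
      = A.indicator (fun t => (ENNReal.ofReal (f t)) ^ d * c) t := by
    intro t
    by_cases ht : t ∈ A
    · have : Prod.mk t ⁻¹' T = {v : Fin d → ℝ | Real.sqrt (∑ i, v i ^ 2) ≤ f t} := by
        ext v; simp [hT, ht]
      rw [this, Set.indicator_of_mem ht]
      -- identify with closed ball in EuclideanSpace
      have hpre2 : {v : Fin d → ℝ | Real.sqrt (∑ i, v i ^ 2) ≤ f t}
          = (MeasurableEquiv.toLp 2 (Fin d → ℝ)).symm.symm ⁻¹' (closedBall 0 (f t)) := by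
        ext v
        simp only [Set.mem_setOf_eq, Set.mem_preimage, mem_closedBall, dist_zero_right]
        rw [EuclideanSpace.norm_eq]
        simp [Real.norm_eq_abs, sq_abs]
      rw [hpre2, ((EuclideanSpace.volume_preserving_symm_measurableEquiv_toLp (Fin d)).symm (MeasurableEquiv.toLp 2 (Fin d → ℝ)).symm).measure_preimage
        measurableSet_closedBall.nullMeasurableSet]
      rw [EuclideanSpace.volume_closedBall]
      simp [hc, Fintype.card_fin]
    · have : Prod.mk t ⁻¹' T = ∅ := by
        ext v; simp [hT, ht]
      rw [this, Set.indicator_of_notMem ht]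
      simp
  simp_rw [hslice]
  rw [lintegral_indicator hA]

lemma lint_ofReal_Icc (a b : ℝ) (hab : a ≤ b) (g : ℝ → ℝ) (hg : Continuous g)
    (hg0 : ∀ t ∈ Icc a b, 0 ≤ g t) :
    ∫⁻ t in Icc a b, ENNReal.ofReal (g t) = ENNReal.ofReal (∫ t in a..b, g t) := by
  rw [← Measure.restrict_congr_set MeasureTheory.Ioc_ae_eq_Icc,
    intervalIntegral.integral_of_le hab,
    ← MeasureTheory.ofReal_integral_eq_lintegral_ofReal
      ((hg.integrableOn_Icc).mono_set Ioc_subset_Icc_self)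
      (((ae_restrict_mem measurableSet_Ioc)).mono fun t ht => hg0 t (Ioc_subset_Icc_self ht))]

lemma integ1 (d : ℕ) (σ β : ℝ) (hβ : 0 < β) :
    ∫ t in (0:ℝ)..β, ((σ/β)*t)^d = σ^d * β / (d+1) := by
  simp_rw [mul_pow]
  rw [intervalIntegral.integral_const_mul, integral_pow, div_pow]
  rw [zero_pow (by omega), sub_zero, pow_succ]
  have hβd : (β:ℝ)^d ≠ 0 := pow_ne_zero _ hβ.ne'
  field_simp

lemma integ2 (d : ℕ) (β : ℝ) (hβ : β ≤ 1) :
    ∫ t in β..(1:ℝ), Real.sqrt (2*(1-t))^d = Real.sqrt (2*(1-β))^(d+2) / (d+2) := by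
  have h1 : ∫ t in β..(1:ℝ), Real.sqrt (2*(1-t))^d
      = ∫ s in (0:ℝ)..(1-β), Real.sqrt (2*s)^d := by
    rw [show (∫ t in β..(1:ℝ), Real.sqrt (2*(1-t))^d)
        = ∫ t in β..(1:ℝ), (fun s => Real.sqrt (2*s)^d) (1 - t) from rfl,
      intervalIntegral.integral_comp_sub_left (fun s => Real.sqrt (2*s)^d) 1]
    norm_num
  have hm : (0:ℝ) ≤ 2*(1-β) := by linarith
  have h2 : ∫ s in (0:ℝ)..(1-β), Real.sqrt (2*s)^d
      = (2:ℝ)⁻¹ • ∫ y in (0:ℝ)..(2*(1-β)), Real.sqrt y ^ d := by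
    rw [show (∫ s in (0:ℝ)..(1-β), Real.sqrt (2*s)^d)
        = ∫ s in (0:ℝ)..(1-β), (fun y => Real.sqrt y ^ d) (2*s) from rfl,
      intervalIntegral.integral_comp_mul_left (fun y => Real.sqrt y ^ d) two_ne_zero]
    norm_num
  have h3 : ∫ y in (0:ℝ)..(2*(1-β)), Real.sqrt y ^ d
      = (2*(1-β)) ^ ((d:ℝ)/2 + 1) / ((d:ℝ)/2 + 1) := by
    have heq : Set.EqOn (fun y => Real.sqrt y ^ d) (fun y : ℝ => y ^ ((d:ℝ)/2))
        (Set.uIcc 0 (2*(1-β))) := by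
      intro y hy
      rw [Set.uIcc_of_le hm] at hy
      have hy0 : 0 ≤ y := hy.1
      simp only
      rw [Real.sqrt_eq_rpow, ← Real.rpow_natCast (y ^ ((1:ℝ)/2)) d, ← Real.rpow_mul hy0]
      congr 1
      ring
    rw [intervalIntegral.integral_congr heq, integral_rpow (Or.inl (by have := Nat.cast_nonneg (α:=ℝ) d; linarith))]
    rw [Real.zero_rpow (by positivity : (0:ℝ) < (d:ℝ)/2+1).ne']
    ring
  have h4 : Real.sqrt (2*(1-β)) ^ (d+2) = (2*(1-β)) ^ ((d:ℝ)/2 + 1) := by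
    rw [← Real.rpow_natCast (Real.sqrt (2*(1-β))) (d+2), Real.sqrt_eq_rpow,
      ← Real.rpow_mul hm]
    congr 1
    push_cast
    ring
  rw [h1, h2, h3, h4]
  have h5 : ((d:ℝ)/2 + 1) ≠ 0 := by positivity
  have h6 : ((d:ℝ) + 2) ≠ 0 := by positivity
  rw [smul_eq_mul]
  field_simp

lemma model_cone_volume_le (d : ℕ) (hd : 2 ≤ d) (β : ℝ) (hβ0 : 0 < β) (hβ1 : β < 1) :
    volume {X : EuclideanSpace ℝ (Fin (d+1)) | ‖X‖ ≤ 1 ∧ β * ‖X‖ ≤ X 0} ≤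
      ENNReal.ofReal ((Real.sqrt Real.pi ^ d / Real.Gamma ((d:ℝ) / 2 + 1)) *
        (Real.sqrt (1-β^2) ^ d * β / (d+1) + Real.sqrt (2*(1-β)) ^ (d+2) / (d+2))) := by
  haveI : NeZero d := ⟨by omega⟩
  set σ : ℝ := Real.sqrt (1-β^2) with hσdef
  have hσ0 : 0 ≤ σ := Real.sqrt_nonneg _
  have hσsq : σ^2 = 1 - β^2 := Real.sq_sqrt (by nlinarith)
  set f₁ : ℝ → ℝ := fun t => (σ/β)*t with hf₁def
  set f₂ : ℝ → ℝ := fun t => Real.sqrt (2*(1-t)) with hf₂def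
  set S₁ : Set (EuclideanSpace ℝ (Fin (d+1))) :=
    {X | X 0 ∈ Icc (0:ℝ) β ∧ Real.sqrt (∑ i : Fin d, X i.succ ^ 2) ≤ f₁ (X 0)} with hS₁def
  set S₂ : Set (EuclideanSpace ℝ (Fin (d+1))) :=
    {X | X 0 ∈ Icc β 1 ∧ Real.sqrt (∑ i : Fin d, X i.succ ^ 2) ≤ f₂ (X 0)} with hS₂def
  have hsub : {X : EuclideanSpace ℝ (Fin (d+1)) | ‖X‖ ≤ 1 ∧ β * ‖X‖ ≤ X 0} ⊆ S₁ ∪ S₂ := by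
    rintro X ⟨h1, h2⟩
    have hq0 : (0:ℝ) ≤ ∑ i : Fin d, X i.succ ^ 2 :=
      Finset.sum_nonneg fun i _ => sq_nonneg _
    have hsum : ‖X‖^2 = ∑ i : Fin (d+1), X i ^2 := by
      rw [EuclideanSpace.norm_eq, Real.sq_sqrt (by positivity)]
      simp [Real.norm_eq_abs, sq_abs]
    have hst : ‖X‖^2 = X 0 ^2 + ∑ i : Fin d, X i.succ ^ 2 := by
      rw [hsum, Fin.sum_univ_succ]
    have hs0 : 0 ≤ ‖X‖ := norm_nonneg X
    have h0t : 0 ≤ X 0 := le_trans (by positivity) h2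
    have hts : X 0 ≤ ‖X‖ := by nlinarith
    rcases le_total (X 0) β with hcase | hcase
    · left
      refine ⟨⟨h0t, hcase⟩, ?_⟩
      have hrhs : 0 ≤ f₁ (X 0) := by
        simp only [hf₁def]
        positivity
      rw [show f₁ (X 0) = Real.sqrt ((f₁ (X 0))^2) from (Real.sqrt_sq hrhs).symm]
      apply Real.sqrt_le_sqrt
      simp only [hf₁def, mul_pow, div_pow]
      rw [hσsq]
      have hβX : (β * ‖X‖)^2 ≤ X 0 ^2 := pow_le_pow_left₀ (by positivity) h2 2
      have hβ2 : (0:ℝ) < β^2 := by positivity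
      rw [div_mul_eq_mul_div, le_div_iff₀ hβ2]
      nlinarith
    · right
      refine ⟨⟨hcase, le_trans hts h1⟩, ?_⟩
      apply Real.sqrt_le_sqrt
      nlinarith
  have hle := (measure_mono hsub).trans (measure_union_le (μ := (volume : MeasureTheory.Measure (EuclideanSpace ℝ (Fin (d+1))))) S₁ S₂)
  set v : ℝ := Real.sqrt Real.pi ^ d / Real.Gamma ((d:ℝ) / 2 + 1) with hvdef
  have hv0 : 0 ≤ v := by
    have := Real.Gamma_pos_of_pos (show (0:ℝ) < (d:ℝ)/2 + 1 by positivity)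
    positivity
  have hC1 : (0:ℝ) ≤ σ^d * β / (d+1) := by positivity
  have hC2 : (0:ℝ) ≤ Real.sqrt (2*(1-β)) ^ (d+2) / (d+2) := by positivity
  have e₁ : volume S₁ = ENNReal.ofReal (v * (σ^d * β / (d+1))) := by
    rw [hS₁def, slab_volume d (Icc 0 β) measurableSet_Icc f₁
        (fun t ht => by simp only [hf₁def]; have := ht.1; positivity)
        (by simp only [hf₁def]; exact (measurable_id.const_mul (σ/β) : Measurable fun t : ℝ => (σ/β)*t))]
    have hcong : ∫⁻ t in Icc (0:ℝ) β, (ENNReal.ofReal (f₁ t)) ^ d * ENNReal.ofReal v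
        = ∫⁻ t in Icc (0:ℝ) β, ENNReal.ofReal ((f₁ t)^d * v) := by
      refine setLIntegral_congr_fun measurableSet_Icc (fun t ht => ?_)
      rw [← ENNReal.ofReal_pow (by simp only [hf₁def]; have := ht.1; positivity),
        ← ENNReal.ofReal_mul (by simp only [hf₁def]; have := ht.1; positivity)]
    rw [hcong, lint_ofReal_Icc 0 β hβ0.le _
        (by simp only [hf₁def]; fun_prop)
        (fun t ht => by have h := ht.1; simp only [hf₁def]; positivity)]
    rw [intervalIntegral.integral_mul_const, integ1 d σ β hβ0, mul_comm]
  have e₂ : volume S₂ = ENNReal.ofReal (v * (Real.sqrt (2*(1-β)) ^ (d+2) / (d+2))) := by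
    rw [hS₂def, slab_volume d (Icc β 1) measurableSet_Icc f₂
        (fun t ht => by simp only [hf₂def]; positivity)
        (by simp only [hf₂def]; fun_prop)]
    have hcong : ∫⁻ t in Icc β (1:ℝ), (ENNReal.ofReal (f₂ t)) ^ d * ENNReal.ofReal v
        = ∫⁻ t in Icc β (1:ℝ), ENNReal.ofReal ((f₂ t)^d * v) := by
      refine setLIntegral_congr_fun measurableSet_Icc (fun t ht => ?_)
      rw [← ENNReal.ofReal_pow (by simp only [hf₂def]; positivity),
        ← ENNReal.ofReal_mul (by positivity)]
    rw [hcong, lint_ofReal_Icc β 1 hβ1.le _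
        (by simp only [hf₂def]; fun_prop)
        (fun t ht => by simp only [hf₂def]; positivity)]
    rw [intervalIntegral.integral_mul_const, integ2 d β hβ1.le, mul_comm]
  calc volume {X : EuclideanSpace ℝ (Fin (d+1)) | ‖X‖ ≤ 1 ∧ β * ‖X‖ ≤ X 0}
      ≤ volume S₁ + volume S₂ := hle
    _ = ENNReal.ofReal (v * (σ^d * β / (d+1))) + ENNReal.ofReal (v * (Real.sqrt (2*(1-β)) ^ (d+2) / (d+2))) := by rw [e₁, e₂]
    _ = ENNReal.ofReal (v * (σ^d * β / (d+1) + Real.sqrt (2*(1-β)) ^ (d+2) / (d+2))) := by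
        rw [← ENNReal.ofReal_add (by positivity) (by positivity), ← mul_add]

lemma cone_volume_le (d : ℕ) (hd : 2 ≤ d) (β : ℝ) (hβ0 : 0 < β) (hβ1 : β < 1)
    (w : EuclideanSpace ℝ (Fin (d+1))) (hw : ‖w‖ = 1) :
    volume {x : EuclideanSpace ℝ (Fin (d+1)) | ‖x‖ ≤ 1 ∧ β * ‖x‖ ≤ ⟪x, w⟫} ≤
      ENNReal.ofReal ((Real.sqrt Real.pi ^ d / Real.Gamma ((d:ℝ) / 2 + 1)) *
        (Real.sqrt (1-β^2) ^ d * β / (d+1) + Real.sqrt (2*(1-β)) ^ (d+2) / (d+2))) := by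
  classical
  -- build an orthonormal basis with b 0 = w
  haveI : Subsingleton (({0} : Set (Fin (d+1)))) :=
    ⟨fun a b => Subtype.ext (a.2.trans b.2.symm)⟩
  have hv : Orthonormal ℝ (({0} : Set (Fin (d+1))).restrict (fun _ => w)) := by
    constructor
    · intro i; exact hw
    · intro i j hij; exact absurd (Subsingleton.elim i j) hij
  obtain ⟨b, hb⟩ := hv.exists_orthonormalBasis_extension_of_card_eq
    (by simp [finrank_euclideanSpace]) 
  have hb0 : b 0 = w := hb 0 rfl
  set e := b.repr with he
  have hKeq : {x : EuclideanSpace ℝ (Fin (d+1)) | ‖x‖ ≤ 1 ∧ β * ‖x‖ ≤ ⟪x, w⟫}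
      = ⇑e ⁻¹' {X : EuclideanSpace ℝ (Fin (d+1)) | ‖X‖ ≤ 1 ∧ β * ‖X‖ ≤ X 0} := by
    ext x
    have h1 : ‖e x‖ = ‖x‖ := e.norm_map x
    have h2 : (e x) 0 = ⟪x, w⟫ := by
      have : ⟪e x, e w⟫ = ⟪x, w⟫ := e.inner_map_map x w
      rw [← this, ← hb0, he, b.repr_self 0, EuclideanSpace.inner_single_right]
      simp
    simp [h1, h2]
  have hKmeas : MeasurableSet {X : EuclideanSpace ℝ (Fin (d+1)) | ‖X‖ ≤ 1 ∧ β * ‖X‖ ≤ X 0} := by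
    rw [Set.setOf_and]
    refine MeasurableSet.inter ?_ ?_
    · exact measurableSet_le (by fun_prop) measurable_const
    · refine measurableSet_le (by fun_prop) ?_
      exact (EuclideanSpace.proj (0 : Fin (d+1))).continuous.measurable
  rw [hKeq, (e.measurePreserving).measure_preimage hKmeas.nullMeasurableSet]
  exact model_cone_volume_le d hd β hβ0 hβ1

lemma exists_maximal_separated (d : ℕ) (β : ℝ) (hβ1 : β < 1) :
    ∃ M : Finset (EuclideanSpace ℝ (Fin (d+1))),
      (∀ w ∈ M, ‖w‖ = 1) ∧
      (∀ w ∈ M, ∀ y ∈ M, β ≤ ⟪y, w⟫ → y = w) ∧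
      (∀ y : EuclideanSpace ℝ (Fin (d+1)), ‖y‖ = 1 → ∃ w ∈ M, β ≤ ⟪y, w⟫) := by
  classical
  set E := EuclideanSpace ℝ (Fin (d+1))
  set 𝒞 : Set (Set E) := {S | (∀ x ∈ S, ‖x‖ = 1) ∧ S.Pairwise fun x y => ⟪x, y⟫ < β} with h𝒞
  obtain ⟨M0, hM0max⟩ := zorn_subset 𝒞 (by
    intro c hc hchain
    refine ⟨⋃₀ c, ⟨?_, ?_⟩, fun s hs => subset_sUnion_of_mem hs⟩
    · rintro x ⟨s, hs, hxs⟩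
      exact (hc hs).1 x hxs
    · rintro x ⟨s, hs, hxs⟩ y ⟨s', hs', hys'⟩ hxy
      rcases hchain.total hs hs' with h | h
      · exact (hc hs').2 (h hxs) hys' hxy
      · exact (hc hs).2 hxs (h hys') hxy)
  have hM0 : M0 ∈ 𝒞 := hM0max.prop
  have hsym : Symmetric (fun x y : E => ⟪x, y⟫ < β) := by
    intro x y h; rwa [real_inner_comm]
  -- finiteness
  have hρ : (0:ℝ) < Real.sqrt (2 - 2*β) / 2 := by
    have : (0:ℝ) < 2 - 2*β := by linarith
    positivity
  set ρ : ℝ := Real.sqrt (2 - 2*β) / 2 with hρdef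
  have hρsq : (2*ρ)^2 = 2 - 2*β := by
    rw [hρdef]
    rw [mul_div_cancel₀ _ (two_ne_zero)]
    exact Real.sq_sqrt (by linarith)
  obtain ⟨t, hts, htf, hcov⟩ := (isCompact_sphere (0:E) 1).finite_cover_balls hρ
  have hM0fin : M0.Finite := by
    have hsubcov : M0 ⊆ ⋃ x ∈ t, (M0 ∩ ball x ρ) := by
      intro m hm
      have : m ∈ Metric.sphere (0:E) 1 := by
        rw [mem_sphere_zero_iff_norm]; exact hM0.1 m hm
      obtain ⟨x, hx⟩ := Set.mem_iUnion₂.mp (hcov this)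
      exact Set.mem_iUnion₂.mpr ⟨x, hx.1, hm, hx.2⟩
    refine Set.Finite.subset (Set.Finite.biUnion htf fun x _ => ?_) hsubcov
    refine Set.Subsingleton.finite ?_
    intro a ⟨haM, haB⟩ b ⟨hbM, hbB⟩
    by_contra hab
    have hlt : ⟪a, b⟫ < β := hM0.2 haM hbM hab
    have hd2 : dist a b < 2*ρ := by
      calc dist a b ≤ dist a x + dist x b := dist_triangle a x b
        _ < ρ + ρ := by
            rw [mem_ball] at haB hbB
            rw [dist_comm x b] at *
            linarith [haB, hbB]
        _ = 2*ρ := by ring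
    have hnorm : dist a b ^ 2 = 2 - 2*⟪a,b⟫ := by
      rw [dist_eq_norm, norm_sub_sq_real, hM0.1 a haM, hM0.1 b hbM]
      ring
    nlinarith [dist_nonneg (x := a) (y := b)]
  -- covering property
  have hcover : ∀ y : E, ‖y‖ = 1 → ∃ w ∈ M0, β ≤ ⟪y, w⟫ := by
    intro y hy
    by_cases hyM : y ∈ M0
    · exact ⟨y, hyM, by rw [real_inner_self_eq_norm_sq, hy]; nlinarith⟩
    by_contra hno
    push_neg at hno
    have hins : insert y M0 ∈ 𝒞 := by
      constructor
      · rintro x hx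
        rcases Set.mem_insert_iff.mp hx with rfl | hx
        · exact hy
        · exact hM0.1 x hx
      · rw [Set.pairwise_insert]
        exact ⟨hM0.2, fun b hb _ => ⟨hno b hb, hsym (hno b hb)⟩⟩
    have := hM0max.2 hins (Set.subset_insert y M0)
    exact hyM (this (Set.mem_insert y M0))
  refine ⟨hM0fin.toFinset, ?_, ?_, ?_⟩
  · intro w hw; exact hM0.1 w (hM0fin.mem_toFinset.mp hw)
  · intro w hw y hy hβle
    by_contra hne
    have := hM0.2 (hM0fin.mem_toFinset.mp hy) (hM0fin.mem_toFinset.mp hw) hne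
    linarith
  · intro y hy
    obtain ⟨w, hwM, hw⟩ := hcover y hy
    exact ⟨w, hM0fin.mem_toFinset.mpr hwM, hw⟩

lemma key_ineq (u : ℝ) (hu0 : 0 < u) (hu : u < 1 - Real.sqrt 2 / 2) :
    Real.sqrt (2*u) * (1+u) ≤ 1 := by
  have h2 : (Real.sqrt 2)^2 = 2 := Real.sq_sqrt (by norm_num)
  have hpos : (0:ℝ) ≤ Real.sqrt 2 := Real.sqrt_nonneg 2
  have h141 : (1.41:ℝ) ≤ Real.sqrt 2 := by nlinarith
  have hu' : u ≤ 0.295 := by linarith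
  have ha2 : (Real.sqrt (2*u) * (1+u))^2 = 2*u*(1+u)^2 := by
    rw [mul_pow, Real.sq_sqrt (by positivity)]
  have hle1 : 2*u*(1+u)^2 ≤ 1 := by nlinarith
  nlinarith [Real.sqrt_nonneg (2*u), sq_nonneg (Real.sqrt (2*u) * (1+u) - 1),
    sq_nonneg (Real.sqrt (2*u) * (1+u) + 1), mul_nonneg (Real.sqrt_nonneg (2*u)) (by linarith : (0:ℝ) ≤ 1+u)]

theorem stmt10 (d : ℕ) (hd : 2 ≤ d) (r θ : ℝ) (hr : 0 < r)
    (hθ0 : 0 < θ) (hθ : θ < (1 - Real.sqrt 2 / 2) * r) :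
    ∃ W : Finset (EuclideanSpace ℝ (Fin (d + 1))),
      (∀ w ∈ W, ‖w‖ = r) ∧
      (((d : ℝ) ^ 2 - 1) * Real.sqrt Real.pi / d *
          (Real.Gamma ((d : ℝ) / 2 + 1) / Real.Gamma ((d : ℝ) / 2 + 3 / 2)) *
          (r / (2 * θ)) ^ (((d : ℝ) - 1) / 2) ≤ (W.card : ℝ)) ∧
      (∀ w ∈ W, ∀ y ∈ W, ⟪y - w, w⟫ ≥ -θ * r → y = w) := by
  classical
  have hs2pos : (0:ℝ) < Real.sqrt 2 := by positivity
  have h2 : (Real.sqrt 2)^2 = 2 := Real.sq_sqrt (by norm_num)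
  have h141 : (1.41:ℝ) ≤ Real.sqrt 2 := by nlinarith
  have hs2lt : Real.sqrt 2 < 1.5 := by nlinarith
  set u : ℝ := θ / r with hudef
  have hu0 : 0 < u := div_pos hθ0 hr
  have hu1 : u < 1 - Real.sqrt 2 / 2 := by
    rw [hudef, div_lt_iff₀ hr]; linarith
  have hult : u < 0.295 := by linarith
  set β : ℝ := 1 - u with hβdef
  have hβ0 : 0 < β := by rw [hβdef]; linarith
  have hβ1 : β < 1 := by rw [hβdef]; linarith
  obtain ⟨M, hMnorm, hMsep, hMcov⟩ := exists_maximal_separated d β hβ1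
  -- the covering by cones
  set K : EuclideanSpace ℝ (Fin (d+1)) → Set (EuclideanSpace ℝ (Fin (d+1))) :=
    fun w => {x | ‖x‖ ≤ 1 ∧ β * ‖x‖ ≤ ⟪x, w⟫} with hKdef
  have hcov : (ball (0 : EuclideanSpace ℝ (Fin (d+1))) 1) \ {0} ⊆ ⋃ w ∈ M, K w := by
    intro x hx
    have hx0 : x ≠ 0 := hx.2
    have hxlt : ‖x‖ < 1 := mem_ball_zero_iff.mp hx.1
    have hxn : 0 < ‖x‖ := norm_pos_iff.mpr hx0
    obtain ⟨w, hwM, hw⟩ := hMcov (‖x‖⁻¹ • x) (by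
      rw [norm_smul, norm_inv, norm_norm]
      field_simp)
    refine Set.mem_iUnion₂.mpr ⟨w, hwM, hxlt.le, ?_⟩
    rw [real_inner_smul_left] at hw
    calc β * ‖x‖ ≤ (‖x‖⁻¹ * ⟪x,w⟫) * ‖x‖ := by nlinarith
      _ = ⟪x,w⟫ := by field_simp
  -- constants
  set G : ℝ := Real.Gamma ((d:ℝ)/2 + 1) with hGdef
  set H : ℝ := Real.Gamma ((d:ℝ)/2 + 3/2) with hHdef
  have hG : 0 < G := Real.Gamma_pos_of_pos (by positivity)
  have hH : 0 < H := Real.Gamma_pos_of_pos (by positivity)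
  set a : ℝ := Real.sqrt Real.pi with hadef
  have ha : 0 < a := Real.sqrt_pos.mpr Real.pi_pos
  set σ : ℝ := Real.sqrt (1 - β^2) with hσdef
  set τ : ℝ := Real.sqrt (2*u) with hτdef
  have hτ0 : 0 < τ := Real.sqrt_pos.mpr (by linarith)
  have hτsq : τ^2 = 2*u := Real.sq_sqrt (by linarith)
  have hσ0 : 0 ≤ σ := Real.sqrt_nonneg _
  have hτβ : Real.sqrt (2*(1-β)) = τ := by rw [hτdef, hβdef]; ring_nf
  set C : ℝ := σ^d * β / (d+1) + τ^(d+2) / (d+2) with hCdef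
  have hC0 : 0 < C := by
    have h1 : (0:ℝ) ≤ σ^d * β / (d+1) := by positivity
    have h2' : (0:ℝ) < τ^(d+2) / (d+2) := by positivity
    rw [hCdef]
    exact add_pos_of_nonneg_of_pos h1 h2'
  set v : ℝ := a^d / G with hvdef
  have hv0 : 0 < v := by positivity
  -- volume chain
  have hvole : volume (ball (0 : EuclideanSpace ℝ (Fin (d+1))) 1)
      ≤ (M.card : ℝ≥0∞) * ENNReal.ofReal (v * C) := by
    calc volume (ball (0 : EuclideanSpace ℝ (Fin (d+1))) 1)
        = volume ((ball (0 : EuclideanSpace ℝ (Fin (d+1))) 1) \ {0}) :=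
          (measure_diff_null (measure_singleton 0)).symm
      _ ≤ volume (⋃ w ∈ M, K w) := measure_mono hcov
      _ ≤ ∑ w ∈ M, volume (K w) := measure_biUnion_finset_le (μ := volume) M K
      _ ≤ M.card • ENNReal.ofReal (v * C) := by
          refine Finset.sum_le_card_nsmul M _ _ fun w hw => ?_
          have := cone_volume_le d hd β hβ0 hβ1 w (hMnorm w hw)
          rw [hτβ] at this
          exact this
      _ = (M.card : ℝ≥0∞) * ENNReal.ofReal (v * C) := by rw [nsmul_eq_mul]
  -- to reals
  have hvball : volume (ball (0 : EuclideanSpace ℝ (Fin (d+1))) 1)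
      = ENNReal.ofReal (a^(d+1) / H) := by
    rw [EuclideanSpace.volume_ball]
    have hcard : (Fintype.card (Fin (d+1)) : ℝ) = (d:ℝ) + 1 := by simp
    rw [Fintype.card_fin]
    have : Real.Gamma (((d+1:ℕ):ℝ)/2 + 1) = H := by
      rw [hHdef]; congr 1; push_cast; ring
    rw [this]
    simp [hadef]
  have hreal : a^(d+1)/H ≤ (M.card:ℝ) * (v * C) := by
    rw [hvball] at hvole
    rw [← ENNReal.ofReal_natCast M.card, ← ENNReal.ofReal_mul (by positivity)] at hvole
    exact (ENNReal.ofReal_le_ofReal_iff (by positivity)).mp hvole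
  have hNge : a^(d+1)/H / (v*C) ≤ (M.card:ℝ) := by
    rw [div_le_iff₀ (by positivity)]
    exact hreal
  -- bound C
  have hσleτ : σ ≤ τ := by
    rw [hσdef, hτdef]
    apply Real.sqrt_le_sqrt
    rw [hβdef]; nlinarith
  have hkey := key_ineq u hu0 hu1
  rw [← hτdef] at hkey
  have hCle : C ≤ τ^d * (1+u) / (↑d+1) := by
    have hτd : σ^d ≤ τ^d := pow_le_pow_left₀ hσ0 hσleτ d
    have hb1 : σ^d*β/(↑d+1) ≤ τ^d*β/(↑d+1) := by gcongr
    have hb2 : τ^(d+2)/(↑d+2) ≤ τ^d*(2*u)/(↑d+1) := by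
      rw [pow_add, hτsq]
      apply div_le_div₀ (by positivity) le_rfl (by positivity) (by push_cast; linarith)
    calc C ≤ τ^d*β/(↑d+1) + τ^d*(2*u)/(↑d+1) := by rw [hCdef]; exact add_le_add hb1 hb2
      _ = τ^d * (1+u)/(↑d+1) := by
          rw [← add_div]
          congr 1
          rw [hβdef]; ring
  -- rewrite the power in the goal
  have h2u0 : (0:ℝ) ≤ 2*u := by linarith
  have hrθ : r/(2*θ) = (2*u)⁻¹ := by
    rw [hudef]
    field_simp
  have hpow : (r/(2*θ)) ^ (((d:ℝ)-1)/2) = (τ^(d-1))⁻¹ := by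
    rw [hrθ, Real.inv_rpow h2u0]
    congr 1
    rw [← Real.rpow_natCast τ (d-1), hτdef, Real.sqrt_eq_rpow, ← Real.rpow_mul h2u0]
    congr 1
    rw [Nat.cast_sub (by omega : 1 ≤ d)]
    push_cast
    ring
  have hdR : (2:ℝ) ≤ (d:ℝ) := by exact_mod_cast hd
  have hT0 : (0:ℝ) ≤ ((d:ℝ)^2-1) * a / d * (G/H) := by
    have : (0:ℝ) ≤ (d:ℝ)^2 - 1 := by nlinarith
    positivity
  have hτd' : τ^(d-1) ≠ 0 := pow_ne_zero _ hτ0.ne'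
  have hTle : ((d:ℝ)^2-1) * a / d * (G/H) * (τ^(d-1))⁻¹ ≤ (M.card:ℝ) := by
    refine le_trans ?_ hNge
    rw [le_div_iff₀ (by positivity)]
    have e1 : τ^d = τ^(d-1)*τ := by
      rw [← pow_succ]
      congr 1
      omega
    calc ((d:ℝ)^2-1) * a / d * (G/H) * (τ^(d-1))⁻¹ * (v*C)
        ≤ ((d:ℝ)^2-1) * a / d * (G/H) * (τ^(d-1))⁻¹ * (v*(τ^d*(1+u)/(↑d+1))) := by
          apply mul_le_mul_of_nonneg_left ?_ (by positivity)
          exact mul_le_mul_of_nonneg_left hCle hv0.le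
      _ = (a^(d+1)/H) * (((d:ℝ)^2-1)/(↑d*(↑d+1)) * (τ*(1+u))) := by
          rw [e1, pow_succ, hvdef]
          field_simp
          ring
      _ ≤ (a^(d+1)/H) * 1 := by
          apply mul_le_mul_of_nonneg_left ?_ (by positivity)
          have hq1 : ((d:ℝ)^2-1)/(↑d*(↑d+1)) ≤ 1 := by
            rw [div_le_one (by positivity)]
            nlinarith
          have hq2 : (0:ℝ) ≤ τ*(1+u) := by positivity
          calc ((d:ℝ)^2-1)/(↑d*(↑d+1)) * (τ*(1+u)) ≤ 1 * 1 :=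
                mul_le_mul hq1 hkey hq2 (by norm_num)
            _ = 1 := by norm_num
      _ = a^(d+1)/H := mul_one _
  -- construct W
  refine ⟨M.image (fun x => r • x), ?_, ?_, ?_⟩
  · intro w hw
    obtain ⟨w', hw', rfl⟩ := Finset.mem_image.mp hw
    rw [norm_smul, hMnorm w' hw', Real.norm_eq_abs, abs_of_pos hr, mul_one]
  · rw [Finset.card_image_of_injective M (smul_right_injective _ hr.ne')]
    rw [hpow]
    exact hTle
  · intro w hw y hy hip
    obtain ⟨w', hw', rfl⟩ := Finset.mem_image.mp hw
    obtain ⟨y', hy', rfl⟩ := Finset.mem_image.mp hy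
    have hinner : ⟪r • y' - r • w', r • w'⟫ = r^2 * (⟪y', w'⟫ - 1) := by
      rw [inner_sub_left, real_inner_smul_left, real_inner_smul_left,
        real_inner_smul_right, real_inner_smul_right,
        real_inner_self_eq_norm_sq, hMnorm w' hw']
      ring
    rw [hinner] at hip
    have hr2 : (0:ℝ) < r^2 := by positivity
    have hβle : β ≤ ⟪y', w'⟫ := by
      have hθu : θ = u * r := by rw [hudef]; field_simp
      rw [ge_iff_le, hθu] at hip
      have h3 : r^2 * β ≤ r^2 * ⟪y',w'⟫ := by
        rw [hβdef]
        linarith only [hip]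
      exact le_of_mul_le_mul_left h3 hr2
    rw [hMsep w' hw' y' hy' hβle]

end
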